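/- Let ω be a coherent state on a polarized C*-algebra (A, P̄) with norm normal ordering and π_ω its (irreducible) GNS representation. A unit vector v ∈ H_ω defines a coherent state ν(x) = ⟨v, π_ω(x)v⟩ if and only if π_ω(a)v = ν(a)v for all a ∈ P̄. -/
import Mathlib


set_option linter.unusedSectionVars false

open scoped ComplexOrder InnerProductSpace

variable {A : Type*} [NormedRing A] [StarRing A] [CStarRing A] [NormedAlgebra ℂ A]
  [StarModule ℂ A] [CompleteSpace A]

/-- A state on a unital C*-algebra: a positive linear functional of norm one
(equivalently, taking the value 1 at the unit). -/
def IsState (ω : A →ₗ[ℂ] ℂ) : Prop :=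
  ω 1 = 1 ∧ ∀ x : A, 0 ≤ ω (star x * x)

/-- A polarization of a unital C*-algebra `A`: a closed commutative unital Banach
subalgebra `P` generating `A` (as a C*-algebra) with `P ∩ P* = ℂ·1`. -/
def IsPolarization (P : Subalgebra ℂ A) : Prop :=
  IsClosed (P : Set A) ∧
  (∀ a ∈ P, ∀ b ∈ P, a * b = b * a) ∧
  (Algebra.adjoin ℂ ((P : Set A) ∪ star (P : Set A))).topologicalClosure = ⊤ ∧
  (∀ x ∈ P, star x ∈ P → ∃ c : ℂ, x = algebraMap ℂ A c)

/-- A coherent state on the polarized C*-algebra `(A, P)`. -/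
def IsCoherentState (P : Subalgebra ℂ A) (ω : A →ₗ[ℂ] ℂ) : Prop :=
  IsState ω ∧ ∀ x : A, ∀ a ∈ P, ω (x * a) = ω x * ω a

/-- The polarized C*-algebra `(A, P)` admits norm normal ordering: finite sums
`∑ bₖ* aₖ` with `aₖ, bₖ ∈ P` are norm-dense in `A`. -/
def AdmitsNormalOrdering (P : Subalgebra ℂ A) : Prop :=
  Dense {x : A | ∃ (n : ℕ) (a b : Fin n → A), (∀ i, a i ∈ P ∧ b i ∈ P) ∧
    x = ∑ i, star (b i) * a i}

/-- `(π, H, v)` is a GNS triple for the state `ω`. -/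
def IsGNS {H : Type*} [NormedAddCommGroup H] [InnerProductSpace ℂ H] [CompleteSpace H]
    (ω : A →ₗ[ℂ] ℂ) (π : A →⋆ₐ[ℂ] (H →L[ℂ] H)) (v : H) : Prop :=
  ‖v‖ = 1 ∧ (∀ x : A, ω x = ⟪v, π x v⟫_ℂ) ∧
    Dense (Set.range fun x : A => π x v)

/-- In the (irreducible) GNS representation of a coherent state `ω` on a
polarized C*-algebra with norm normal ordering, a unit vector `w` defines a coherent
state `ν(x) = ⟪w, π_ω(x) w⟫` if and only if `w` is a simultaneous eigenvector:
`π_ω(a) w = ν(a) w` for all `a ∈ P̄`. -/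
theorem stmt_11 {H : Type*} [NormedAddCommGroup H] [InnerProductSpace ℂ H] [CompleteSpace H]
    (P : Subalgebra ℂ A) (hP : IsPolarization P) (hno : AdmitsNormalOrdering P)
    (ω : A →ₗ[ℂ] ℂ) (hω : IsCoherentState P ω)
    (π : A →⋆ₐ[ℂ] (H →L[ℂ] H)) (v : H) (hGNS : IsGNS ω π v)
    (hirr : ∀ w : H, w ≠ 0 → Dense (Set.range fun x : A => π x w))
    (w : H) (hw : ‖w‖ = 1) :
    (∀ x : A, ∀ a ∈ P, ⟪w, π (x * a) w⟫_ℂ = ⟪w, π x w⟫_ℂ * ⟪w, π a w⟫_ℂ) ↔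
      ∀ a ∈ P, π a w = ⟪w, π a w⟫_ℂ • w := by
  constructor
  · intro h a haP
    set c : ℂ := ⟪w, π a w⟫_ℂ with hc
    have hww : ⟪w, w⟫_ℂ = 1 := by
      rw [inner_self_eq_norm_sq_to_K, hw]; norm_num
    have hsa : ⟪w, π (star a) w⟫_ℂ = starRingEnd ℂ c := by
      rw [map_star, ContinuousLinearMap.star_eq_adjoint,
        ContinuousLinearMap.adjoint_inner_right, ← inner_conj_symm]
    have key : ⟪π a w, π a w⟫_ℂ = starRingEnd ℂ c * c := by
      have h2 := h (star a) a haP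
      rw [hsa, map_mul, ContinuousLinearMap.mul_apply, map_star,
        ContinuousLinearMap.star_eq_adjoint,
        ContinuousLinearMap.adjoint_inner_right] at h2
      exact h2
    have hz : ⟪π a w - c • w, π a w - c • w⟫_ℂ = 0 := by
      rw [inner_sub_sub_self, inner_smul_left, inner_smul_right, inner_smul_left,
        inner_smul_right, hww, key, ← hc]
      have h3 : ⟪π a w, w⟫_ℂ = starRingEnd ℂ c := by
        rw [← inner_conj_symm, ← hc]
      rw [h3]; ring
    exact sub_eq_zero.mp (inner_self_eq_zero.mp hz)
  · intro h x a haP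
    have hww : ⟪w, w⟫_ℂ = 1 := by
      rw [inner_self_eq_norm_sq_to_K, hw]; norm_num
    rw [map_mul, ContinuousLinearMap.mul_apply, h a haP, map_smul, inner_smul_right,
      inner_smul_right, hww, mul_one, mul_comm]
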